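/- Let 𝒳 be a finite alphabet, P ∈ 𝒫(𝒳), and let X^N ∈ 𝒳^N and Y^n ∈ 𝒳^n be independent sequences each drawn i.i.d. from P. Then for every γ > 0, the probability that n·GJS(T_{X^N}, T_{Y^n}, N/n) ≥ γN is at most exp(−γN)·(n+N+1)^{|𝒳|}. -/

import Mathlib

open Filter

namespace SeqClass

variable {𝒳 : Type*} [Fintype 𝒳] [DecidableEq 𝒳]

/-- `P` is a probability mass function on `𝒳`. -/
def IsPMF (P : 𝒳 → ℝ) : Prop := (∀ x, 0 ≤ P x) ∧ ∑ x, P x = 1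

/-- `P` has full support. -/
def FullSupport (P : 𝒳 → ℝ) : Prop := ∀ x, 0 < P x

/-- Kullback–Leibler divergence `D(P‖Q)`. -/
noncomputable def KL (P Q : 𝒳 → ℝ) : ℝ := ∑ x, P x * Real.log (P x / Q x)

/-- Shannon entropy `H(P)`. -/
noncomputable def shEnt (P : 𝒳 → ℝ) : ℝ := -∑ x, P x * Real.log (P x)

/-- The mixture `(α•P + Q)/(1+α)`. -/
noncomputable def mix (P Q : 𝒳 → ℝ) (α : ℝ) : 𝒳 → ℝ := fun x => (α * P x + Q x) / (1 + α)

/-- Generalized Jensen–Shannon divergence `GJS(P,Q,α) = α D(P‖P_α) + D(Q‖P_α)`. -/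
noncomputable def GJS (P Q : 𝒳 → ℝ) (α : ℝ) : ℝ := α * KL P (mix P Q α) + KL Q (mix P Q α)

/-- Chernoff information `C(P,Q)`. -/
noncomputable def chernoff (P Q : 𝒳 → ℝ) : ℝ :=
  -(⨅ η : (Set.Icc (0:ℝ) 1), Real.log (∑ x, P x ^ (η : ℝ) * Q x ^ (1 - (η : ℝ))))

/-- Empirical distribution (type) of a finite sequence. -/
noncomputable def empDist {n : ℕ} (x : Fin n → 𝒳) : 𝒳 → ℝ :=
  fun a => ((Finset.univ.filter fun i => x i = a).card : ℝ) / n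

/-- Type of the length-`n` prefix of `y`. -/
noncomputable def prefixType {m : ℕ} (y : Fin m → 𝒳) (n : ℕ) : 𝒳 → ℝ :=
  fun a => ((Finset.univ.filter fun k : Fin m => (k : ℕ) < n ∧ y k = a).card : ℝ) / n

/-- i.i.d. product probability of a finite sequence. -/
noncomputable def prodProb {n : ℕ} (P : 𝒳 → ℝ) (x : Fin n → 𝒳) : ℝ := ∏ i, P (x i)



noncomputable def bb (N j : ℕ) : ℝ :=
  (N.choose j : ℝ) * ((j : ℝ) / N) ^ j * (((N - j : ℕ) : ℝ) / N) ^ (N - j)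

lemma bb_nonneg (N j : ℕ) : 0 ≤ bb N j := by unfold bb; positivity

lemma bb_zero (N : ℕ) : bb N 0 = 1 := by
  unfold bb
  rcases Nat.eq_zero_or_pos N with h | h
  · subst h; norm_num
  · have : (N : ℝ) ≠ 0 := by positivity
    simp [div_self this]

lemma bb_self (N : ℕ) : bb N N = 1 := by
  unfold bb
  rcases Nat.eq_zero_or_pos N with h | h
  · subst h; norm_num
  · have : (N : ℝ) ≠ 0 := by positivity
    simp [div_self this]

lemma bb_symm {N j : ℕ} (h : j ≤ N) : bb N (N - j) = bb N j := by
  unfold bb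
  rw [Nat.choose_symm h, Nat.sub_sub_self h]
  ring

lemma bb_eq {N j : ℕ} (h : j ≤ N) (hN : 1 ≤ N) :
    bb N j = (N.choose j : ℝ) * (j : ℝ) ^ j * ((N - j : ℕ) : ℝ) ^ (N - j) / (N : ℝ) ^ N := by
  have hN0 : (N : ℝ) ≠ 0 := by positivity
  have hpow : (N:ℝ) ^ j * (N:ℝ) ^ (N - j) = (N:ℝ) ^ N := by
    rw [← pow_add]; congr 1; omega
  unfold bb
  rw [div_pow, div_pow]
  rw [← hpow]
  field_simp

/-- the core monotonicity inequality `(k+1)^k N^N ≤ (N+1)^N k^k` for `1 ≤ k ≤ N`. -/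
lemma core_pow_ineq {k N : ℕ} (hk : 1 ≤ k) (hkN : k ≤ N) :
    ((k : ℝ) + 1) ^ k * (N : ℝ) ^ N ≤ ((N : ℝ) + 1) ^ N * (k : ℝ) ^ k := by
  have hk0 : (0:ℝ) < k := by exact_mod_cast hk
  have hN0 : (0:ℝ) < N := lt_of_lt_of_le hk0 (by exact_mod_cast hkN)
  set j : ℕ := N - k with hj
  have hjk : j + k = N := by omega
  have hjr : (j:ℝ) = (N:ℝ) - k := by
    have : (j:ℝ) + k = N := by exact_mod_cast hjk
    linarith
  have key : (((k:ℝ)+1)/k) ^ k ≤ (((N:ℝ)+1)/N) ^ N := by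
    have hfac : ((k:ℝ)+1)/k = (((N:ℝ)+1)/N) * (1 + (j:ℝ)/((k:ℝ)*((N:ℝ)+1))) := by
      rw [hjr]; field_simp; ring
    have h1 : (1 + (j:ℝ)/((k:ℝ)*((N:ℝ)+1))) ^ k ≤ Real.exp ((j:ℝ)/((N:ℝ)+1)) := by
      have ht : (1 + (j:ℝ)/((k:ℝ)*((N:ℝ)+1))) ≤ Real.exp ((j:ℝ)/((k:ℝ)*((N:ℝ)+1))) := by
        have := Real.add_one_le_exp ((j:ℝ)/((k:ℝ)*((N:ℝ)+1)))
        linarith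
      have hnn : (0:ℝ) ≤ 1 + (j:ℝ)/((k:ℝ)*((N:ℝ)+1)) := by positivity
      calc (1 + (j:ℝ)/((k:ℝ)*((N:ℝ)+1))) ^ k
          ≤ (Real.exp ((j:ℝ)/((k:ℝ)*((N:ℝ)+1)))) ^ k := pow_le_pow_left₀ hnn ht k
        _ = Real.exp ((j:ℝ)/((k:ℝ)*((N:ℝ)+1)) * k) := by
            rw [← Real.exp_nat_mul]; ring_nf
        _ = Real.exp ((j:ℝ)/((N:ℝ)+1)) := by
            congr 1; field_simp
    have h2 : Real.exp ((j:ℝ)/((N:ℝ)+1)) ≤ (((N:ℝ)+1)/N) ^ j := by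
      have hpos : (0:ℝ) < 1 - 1/((N:ℝ)+1) := by
        rw [sub_pos, div_lt_one (by positivity)]; linarith
      have h1' : (1 - 1/((N:ℝ)+1)) * Real.exp (1/((N:ℝ)+1)) ≤ 1 := by
        have hx := Real.add_one_le_exp (-(1/((N:ℝ)+1)))
        rw [Real.exp_neg] at hx
        have he := Real.exp_pos (1/((N:ℝ)+1))
        calc (1 - 1/((N:ℝ)+1)) * Real.exp (1/((N:ℝ)+1))
            ≤ (Real.exp (1/((N:ℝ)+1)))⁻¹ * Real.exp (1/((N:ℝ)+1)) := by
              apply mul_le_mul_of_nonneg_right _ he.le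
              linarith
          _ = 1 := inv_mul_cancel₀ he.ne'
      have hbase : Real.exp (1/((N:ℝ)+1)) ≤ ((N:ℝ)+1)/N := by
        have h2' : Real.exp (1/((N:ℝ)+1)) ≤ 1 / (1 - 1/((N:ℝ)+1)) :=
          (le_div_iff₀ hpos).mpr (by linarith [h1'])
        have : 1 / (1 - 1/((N:ℝ)+1)) = ((N:ℝ)+1)/N := by field_simp; simp [hN0.ne']
        linarith [h2']
      calc Real.exp ((j:ℝ)/((N:ℝ)+1)) = (Real.exp (1/((N:ℝ)+1))) ^ j := by
            rw [← Real.exp_nat_mul]; congr 1; field_simp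
        _ ≤ (((N:ℝ)+1)/N) ^ j := pow_le_pow_left₀ (Real.exp_pos _).le hbase j
    calc (((k:ℝ)+1)/k) ^ k
        = ((((N:ℝ)+1)/N)) ^ k * (1 + (j:ℝ)/((k:ℝ)*((N:ℝ)+1))) ^ k := by
          rw [hfac, mul_pow]
      _ ≤ ((((N:ℝ)+1)/N)) ^ k * Real.exp ((j:ℝ)/((N:ℝ)+1)) := by
          apply mul_le_mul_of_nonneg_left h1 (by positivity)
      _ ≤ ((((N:ℝ)+1)/N)) ^ k * (((N:ℝ)+1)/N) ^ j := by
          apply mul_le_mul_of_nonneg_left h2 (by positivity)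
      _ = (((N:ℝ)+1)/N) ^ N := by rw [← pow_add]; congr 1; omega
  have hkk : (0:ℝ) < (k:ℝ)^k := by positivity
  have hNN : (0:ℝ) < (N:ℝ)^N := by positivity
  rw [div_pow, div_pow, div_le_div_iff₀ hkk hNN] at key
  nlinarith [key]

lemma bb_succ_le {N j : ℕ} (h : j ≤ N) (hN : 1 ≤ N) : bb (N+1) j ≤ bb N j := by
  rcases Nat.eq_zero_or_pos j with rfl | hj
  · rw [bb_zero, bb_zero]
  rcases eq_or_lt_of_le h with heq | hjN
  · -- j = N
    rw [heq, bb_self]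
    unfold bb
    have h1 : N + 1 - N = 1 := by omega
    rw [h1, Nat.choose_succ_self_right]
    push_cast
    rw [pow_one]
    have hN1 : (0:ℝ) < (N:ℝ) + 1 := by positivity
    have heq2 : ((N:ℝ)+1) * ((N:ℝ) / ((N:ℝ)+1)) ^ N * (1 / ((N:ℝ)+1))
        = ((N:ℝ) / ((N:ℝ)+1)) ^ N := by
      field_simp
    rw [heq2]
    apply pow_le_one₀ (by positivity)
    rw [div_le_one hN1]; linarith
  · -- j < N
    set k : ℕ := N - j with hkdef
    have hk1 : 1 ≤ k := by omega
    have hkN : k ≤ N := by omega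
    have hsub : N + 1 - j = k + 1 := by omega
    rw [bb_eq (by omega : j ≤ N + 1) (by omega), bb_eq h hN, hsub, ← hkdef]
    push_cast
    rw [div_le_div_iff₀ (by positivity) (by positivity)]
    have hch : (((N+1).choose j : ℕ) : ℝ) * ((k:ℝ) + 1) = ((N.choose j : ℕ):ℝ) * ((N:ℝ)+1) := by
      have h2 : (N.choose j) * (N + 1) = ((N+1).choose j) * (k + 1) := by
        rw [Nat.choose_mul_succ_eq N j, hsub]
      have h3 := congrArg (fun t : ℕ => (t : ℝ)) h2
      push_cast at h3
      linarith [h3]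
    have core := core_pow_ineq hk1 hkN
    have hnn0 : (0:ℝ) ≤ (j:ℝ)^j := by positivity
    have hnn : (0:ℝ) ≤ ((N.choose j : ℕ):ℝ) * ((N:ℝ)+1) * (j:ℝ)^j := by positivity
    calc ((N+1).choose j : ℝ) * (j:ℝ)^j * ((k:ℝ)+1)^(k+1) * (N:ℝ)^N
        = (((N+1).choose j : ℝ) * ((k:ℝ)+1)) * ((j:ℝ)^j * (((k:ℝ)+1)^k * (N:ℝ)^N)) := by
          ring
      _ = (((N.choose j : ℕ):ℝ) * ((N:ℝ)+1)) * ((j:ℝ)^j * (((k:ℝ)+1)^k * (N:ℝ)^N)) := by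
          rw [hch]
      _ ≤ (((N.choose j : ℕ):ℝ) * ((N:ℝ)+1)) * ((j:ℝ)^j * (((N:ℝ)+1)^N * (k:ℝ)^k)) := by
          apply mul_le_mul_of_nonneg_left _ (by positivity)
          exact mul_le_mul_of_nonneg_left core hnn0
      _ = (N.choose j : ℝ) * (j:ℝ)^j * (k:ℝ)^k * ((N:ℝ)+1)^(N+1) := by
          ring
lemma bb_le_bb_of_le {j M N : ℕ} (hM : j ≤ M) (hMN : M ≤ N) (hM1 : 1 ≤ M) :
    bb N j ≤ bb M j := by
  induction N, hMN using Nat.le_induction with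
  | base => exact le_refl _
  | succ N hMN ih =>
      exact le_trans (bb_succ_le (by omega) (by omega)) ih

lemma bb_central_eq (j : ℕ) : bb (2*j) j = (Nat.centralBinom j : ℝ) / 4 ^ j := by
  rcases Nat.eq_zero_or_pos j with rfl | hj
  · simp [bb, Nat.centralBinom]
  · unfold bb
    have h2j : (2*j) - j = j := by omega
    rw [h2j]
    have hj0 : ((j:ℝ)) ≠ 0 := by positivity
    have : ((j:ℝ) / ((2*j : ℕ):ℝ)) = 1/2 := by
      push_cast; field_simp
    rw [this, Nat.centralBinom]
    push_cast
    have h4 : ((1:ℝ)/2) ^ j * ((1:ℝ)/2) ^ j = 1 / 4 ^ j := by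
      rw [← pow_add, ← two_mul, div_pow, one_pow, pow_mul]
      norm_num
    rw [mul_assoc, h4]
    ring

lemma sq_le_imp_le {a b : ℝ} (ha : 0 ≤ a) (hb : 0 ≤ b) (h : a^2 ≤ b^2) : a ≤ b := by
  nlinarith [h, ha, hb]

lemma centralBinom_sq_le (j : ℕ) :
    ((Nat.centralBinom j : ℝ)) ^ 2 * (3 * j + 1) ≤ 16 ^ j := by
  induction j with
  | zero => simp [Nat.centralBinom]
  | succ j ih =>
      have hrecR : ((j:ℝ) + 1) * (Nat.centralBinom (j+1) : ℝ)
          = 2 * (2 * j + 1) * (Nat.centralBinom j : ℝ) := by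
        exact_mod_cast congrArg (fun t : ℕ => (t : ℝ)) (Nat.succ_mul_centralBinom_succ j)
      have poly : 4 * (2*(j:ℝ)+1)^2 * (3*(j:ℝ)+4) ≤ 16 * ((j:ℝ)+1)^2 * (3*(j:ℝ)+1) := by
        nlinarith [(by positivity : (0:ℝ) ≤ (j:ℝ))]
      have e1 : ((j:ℝ)+1)^2 * (((Nat.centralBinom (j+1) : ℝ))^2 * (3 * ((j:ℝ)+1) + 1))
          = 4 * (2*(j:ℝ)+1)^2 * ((Nat.centralBinom j : ℝ))^2 * (3 * (j:ℝ) + 4) := by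
        linear_combination ((3*(j:ℝ)+4) * (((j:ℝ)+1) * (Nat.centralBinom (j+1) : ℝ)
          + 2 * (2*(j:ℝ)+1) * (Nat.centralBinom j : ℝ))) * hrecR
      have step : ((j:ℝ)+1)^2 * (((Nat.centralBinom (j+1) : ℝ))^2 * (3 * ((j:ℝ)+1) + 1))
          ≤ ((j:ℝ)+1)^2 * 16 ^ (j+1) := by
        rw [e1]
        calc 4 * (2*(j:ℝ)+1)^2 * ((Nat.centralBinom j : ℝ))^2 * (3 * (j:ℝ) + 4)
            = ((Nat.centralBinom j : ℝ))^2 * (4 * (2*(j:ℝ)+1)^2 * (3 * (j:ℝ) + 4)) := by ring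
          _ ≤ ((Nat.centralBinom j : ℝ))^2 * (16 * ((j:ℝ)+1)^2 * (3*(j:ℝ)+1)) := by
              apply mul_le_mul_of_nonneg_left poly (by positivity)
          _ = 16 * ((j:ℝ)+1)^2 * (((Nat.centralBinom j : ℝ))^2 * (3*(j:ℝ)+1)) := by ring
          _ ≤ 16 * ((j:ℝ)+1)^2 * 16 ^ j := by
              apply mul_le_mul_of_nonneg_left _ (by positivity)
              exact_mod_cast ih
          _ = ((j:ℝ)+1)^2 * 16 ^ (j+1) := by ring
      have hfin := le_of_mul_le_mul_left step (by positivity : (0:ℝ) < ((j:ℝ)+1)^2)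
      calc ((Nat.centralBinom (j+1) : ℝ))^2 * (3 * ((j+1 : ℕ):ℝ) + 1)
          = ((Nat.centralBinom (j+1) : ℝ))^2 * (3 * ((j:ℝ)+1) + 1) := by push_cast; ring
        _ ≤ 16 ^ (j+1) := hfin

lemma bb_le_inv_sqrt {N j : ℕ} (h : j ≤ N) :
    bb N j ≤ 1 / Real.sqrt (3 * (min j (N - j)) + 1) := by
  -- reduce to the case 2*j ≤ N
  have main : ∀ i : ℕ, 2 * i ≤ N → bb N i ≤ 1 / Real.sqrt (3 * i + 1) := by
    intro i hi
    have h1 : bb N i ≤ (Nat.centralBinom i : ℝ) / 4 ^ i := by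
      rcases Nat.eq_zero_or_pos i with rfl | hipos
      · rw [bb_zero]; simp [Nat.centralBinom]
      · rw [← bb_central_eq]
        exact bb_le_bb_of_le (by omega) hi (by omega)
    have hsq : (0:ℝ) < Real.sqrt (3 * i + 1) := Real.sqrt_pos.mpr (by positivity)
    have h2 : (Nat.centralBinom i : ℝ) * Real.sqrt (3 * i + 1) ≤ 4 ^ i := by
      have hbs := centralBinom_sq_le i
      have hs2 : (Real.sqrt (3 * i + 1))^2 = 3 * (i:ℝ) + 1 := Real.sq_sqrt (by positivity)
      apply sq_le_imp_le (by positivity) (by positivity)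
      have h16 : ((4:ℝ) ^ i)^2 = 16 ^ i := by
        rw [← pow_mul, mul_comm, pow_mul]; norm_num
      rw [mul_pow, hs2, h16]
      exact_mod_cast hbs
    calc bb N i ≤ (Nat.centralBinom i : ℝ) / 4 ^ i := h1
      _ ≤ 1 / Real.sqrt (3 * i + 1) := by
          rw [div_le_div_iff₀ (by positivity) hsq]
          linarith [h2]
  rcases le_or_gt (2*j) N with hc | hc
  · have : min j (N - j) = j := by omega
    rw [this]; exact main j hc
  · have hmin : min j (N - j) = N - j := by omega
    rw [hmin]
    have hsymm : bb N j = bb N (N - (N - j)) := by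
      congr 1; omega
    rw [hsymm, bb_symm (by omega : N - j ≤ N)]
    exact main (N - j) (by omega)
noncomputable def Bs (N : ℕ) : ℝ := ∑ j ∈ Finset.range (N+1), bb N j

lemma Bs_nonneg (N : ℕ) : 0 ≤ Bs N :=
  Finset.sum_nonneg fun j _ => bb_nonneg N j

lemma sum_j_bb (N : ℕ) :
    ∑ j ∈ Finset.range (N+1), (j:ℝ) * bb N j = (N:ℝ) / 2 * Bs N := by
  have hrefl := Finset.sum_range_reflect (fun j => (j:ℝ) * bb N j) (N+1)
  have hcongr : ∑ j ∈ Finset.range (N+1), ((N + 1 - 1 - j : ℕ):ℝ) * bb N (N + 1 - 1 - j)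
      = ∑ j ∈ Finset.range (N+1), (((N:ℝ) - j) * bb N j) := by
    apply Finset.sum_congr rfl
    intro j hj
    have hjN : j ≤ N := by
      have := Finset.mem_range.mp hj; omega
    have h1 : N + 1 - 1 - j = N - j := by omega
    rw [h1, bb_symm hjN, Nat.cast_sub hjN]
  have key : ∑ j ∈ Finset.range (N+1), (((N:ℝ) - j) * bb N j)
      = ∑ j ∈ Finset.range (N+1), (j:ℝ) * bb N j := by
    rw [← hcongr]; exact hrefl
  have expand : ∑ j ∈ Finset.range (N+1), (((N:ℝ) - j) * bb N j)
      = (N:ℝ) * Bs N - ∑ j ∈ Finset.range (N+1), (j:ℝ) * bb N j := by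
    unfold Bs
    rw [Finset.mul_sum, ← Finset.sum_sub_distrib]
    apply Finset.sum_congr rfl
    intro j _; ring
  linarith [key, expand]

/-- `g t = 1/√(3t+1)` -/
noncomputable def gg (t : ℕ) : ℝ := 1 / Real.sqrt (3 * t + 1)

lemma gg_nonneg (t : ℕ) : 0 ≤ gg t := by unfold gg; positivity

lemma gg_anti {s t : ℕ} (h : s ≤ t) : gg t ≤ gg s := by
  unfold gg
  apply one_div_le_one_div_of_le
  · apply Real.sqrt_pos.mpr; positivity
  · apply Real.sqrt_le_sqrt
    have : (s:ℝ) ≤ t := by exact_mod_cast h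
    linarith

lemma sqrt_step (a : ℝ) (ha : 0 ≤ a) :
    1 / Real.sqrt (a + 3/2) ≤ 2/3 * (Real.sqrt (a + 3) - Real.sqrt a) := by
  set s1 := Real.sqrt a with hs1
  set s2 := Real.sqrt (a + 3/2) with hs2
  set s3 := Real.sqrt (a + 3) with hs3
  have hq1 : s1^2 = a := Real.sq_sqrt ha
  have hq2 : s2^2 = a + 3/2 := Real.sq_sqrt (by linarith)
  have hq3 : s3^2 = a + 3 := Real.sq_sqrt (by linarith)
  have hn1 : 0 ≤ s1 := Real.sqrt_nonneg _
  have hn2 : 0 < s2 := Real.sqrt_pos.mpr (by linarith)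
  have hn3 : 0 < s3 := Real.sqrt_pos.mpr (by linarith)
  have h13 : s1 ≤ s3 := Real.sqrt_le_sqrt (by linarith)
  have h0 : s1 + s3 ≤ 2 * s2 := by
    apply sq_le_imp_le (by linarith) (by linarith)
    nlinarith [sq_nonneg (s1 - s3)]
  have h1 : (s3 - s1) * (s3 + s1) = 3 := by nlinarith [hq1, hq3]
  have hfin : 3 ≤ 2 * (s3 - s1) * s2 := by nlinarith [h0, h1, sub_nonneg.mpr h13]
  rw [div_le_iff₀ hn2]
  linarith [hfin]

lemma tel_sum (K : ℕ) :
    ∑ j ∈ Finset.range K, gg (j+1)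
      ≤ 2/3 * (Real.sqrt (3 * K + 5/2) - Real.sqrt (5/2)) := by
  induction K with
  | zero => simp
  | succ K ih =>
      rw [Finset.sum_range_succ]
      have hstep : gg (K+1) ≤ 2/3 * (Real.sqrt (3*(K:ℝ) + 5/2 + 3) - Real.sqrt (3*(K:ℝ) + 5/2)) := by
        have := sqrt_step (3*(K:ℝ) + 5/2) (by positivity)
        unfold gg
        have harg : (3 * ((K+1 : ℕ):ℝ) + 1) = 3*(K:ℝ) + 5/2 + 3/2 := by push_cast; ring
        rw [harg]
        exact this
      have harg2 : (3 * ((K+1 : ℕ):ℝ) + 5/2) = 3*(K:ℝ) + 5/2 + 3 := by push_cast; ring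
      rw [harg2]
      linarith [ih, hstep]

lemma Bs_succ (M : ℕ) : Bs (M+1) = 2 + ∑ j ∈ Finset.range M, bb (M+1) (j+1) := by
  unfold Bs
  rw [Finset.sum_range_succ, Finset.sum_range_succ']
  rw [bb_zero, bb_self]
  ring

lemma middle_le (M : ℕ) :
    ∑ j ∈ Finset.range M, bb (M+1) (j+1)
      ≤ 2 * ∑ j ∈ Finset.range ((M+1)/2), gg (j+1) := by
  set K := (M+1)/2 with hK
  have hKM : K ≤ M := by omega
  have hpoint : ∀ j ∈ Finset.range M, bb (M+1) (j+1) ≤ gg (min (j+1) (M - j)) := by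
    intro j hj
    have hjM : j < M := Finset.mem_range.mp hj
    have h := bb_le_inv_sqrt (by omega : j+1 ≤ M+1)
    have : (M+1) - (j+1) = M - j := by omega
    rw [this] at h
    exact h
  have h1 : ∑ j ∈ Finset.range M, bb (M+1) (j+1)
      ≤ ∑ j ∈ Finset.range M, gg (min (j+1) (M - j)) :=
    Finset.sum_le_sum hpoint
  have hsplit : ∑ j ∈ Finset.range M, gg (min (j+1) (M - j))
      = ∑ j ∈ Finset.range K, gg (min (j+1) (M - j))
        + ∑ j ∈ Finset.Ico K M, gg (min (j+1) (M - j)) := by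
    rw [Finset.range_eq_Ico, ← Finset.sum_Ico_consecutive _ (Nat.zero_le K) hKM,
      ← Finset.range_eq_Ico]
  have hpart1 : ∑ j ∈ Finset.range K, gg (min (j+1) (M - j))
      ≤ ∑ j ∈ Finset.range K, gg (j+1) := by
    apply Finset.sum_le_sum
    intro j hj
    have hjK : j < K := Finset.mem_range.mp hj
    have : min (j+1) (M - j) = j + 1 := by omega
    rw [this]
  have hpart2 : ∑ j ∈ Finset.Ico K M, gg (min (j+1) (M - j))
      ≤ ∑ j ∈ Finset.Ico K M, gg (M - j) := by
    apply Finset.sum_le_sum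
    intro j hj
    have hjm := Finset.mem_Ico.mp hj
    have : min (j+1) (M - j) = M - j := by omega
    rw [this]
  have hreindex : ∑ j ∈ Finset.Ico K M, gg (M - j)
      = ∑ i ∈ Finset.range (M - K), gg (i + 1) := by
    apply Finset.sum_nbij' (fun j => M - 1 - j) (fun i => M - 1 - i)
    · intro j hj
      have := Finset.mem_Ico.mp hj
      exact Finset.mem_range.mpr (by omega)
    · intro i hi
      have := Finset.mem_range.mp hi
      exact Finset.mem_Ico.mpr (by omega)
    · intro j hj
      have := Finset.mem_Ico.mp hj
      omega
    · intro i hi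
      have := Finset.mem_range.mp hi
      omega
    · intro j hj
      have := Finset.mem_Ico.mp hj
      congr 1
      omega
  have hsubset : ∑ i ∈ Finset.range (M - K), gg (i + 1)
      ≤ ∑ i ∈ Finset.range K, gg (i + 1) := by
    apply Finset.sum_le_sum_of_subset_of_nonneg
    · apply Finset.range_subset_range.mpr; omega
    · intro i _ _; exact gg_nonneg _
  calc ∑ j ∈ Finset.range M, bb (M+1) (j+1)
      ≤ ∑ j ∈ Finset.range M, gg (min (j+1) (M - j)) := h1
    _ = _ + _ := hsplit
    _ ≤ ∑ j ∈ Finset.range K, gg (j+1) + ∑ i ∈ Finset.range K, gg (i+1) := by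
        refine add_le_add hpart1 ?_
        calc ∑ j ∈ Finset.Ico K M, gg (min (j+1) (M - j))
            ≤ ∑ j ∈ Finset.Ico K M, gg (M - j) := hpart2
          _ = ∑ i ∈ Finset.range (M - K), gg (i + 1) := hreindex
          _ ≤ ∑ i ∈ Finset.range K, gg (i + 1) := hsubset
    _ = 2 * ∑ j ∈ Finset.range K, gg (j+1) := by ring

set_option maxHeartbeats 2000000 in
lemma Bs_sq_le (N : ℕ) : (Bs N)^2 ≤ 14/5 * ((N:ℝ)+1) := by
  by_cases hsmall : N ≤ 12
  · interval_cases N <;>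
      norm_num [Bs, bb, Finset.sum_range_succ, Nat.choose]
  · push_neg at hsmall
    obtain ⟨M, rfl⟩ : ∃ M, N = M + 1 := ⟨N - 1, by omega⟩
    have hM : 12 ≤ M := by omega
    set K := (M+1)/2 with hK
    have hBs : Bs (M+1) ≤ 2 + 2 * (2/3 * (Real.sqrt (3 * K + 5/2) - Real.sqrt (5/2))) := by
      rw [Bs_succ]
      have := middle_le M
      have := tel_sum K
      nlinarith [middle_le M, tel_sum K]
    set u := Real.sqrt (3*((M:ℝ)+1)/2 + 5/2) with hu
    have hsqK : Real.sqrt (3 * K + 5/2) ≤ u := by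
      apply Real.sqrt_le_sqrt
      have h2K : (K:ℝ) ≤ ((M:ℝ)+1)/2 := by
        have : 2 * K ≤ M + 1 := by omega
        have := (Nat.cast_le (α := ℝ)).mpr this
        push_cast at this
        linarith
      linarith
    have hu2 : u^2 = 3*((M:ℝ)+1)/2 + 5/2 := Real.sq_sqrt (by positivity)
    have hun : 0 ≤ u := Real.sqrt_nonneg _
    have hu4 : 4 ≤ u := by
      have h22 : (22:ℝ) ≤ u^2 := by
        rw [hu2]
        have : (13:ℝ) ≤ (M:ℝ)+1 := by
          have : (12:ℝ) ≤ (M:ℝ) := by exact_mod_cast hM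
          linarith
        linarith
      nlinarith [hun, h22]
    have hs25 : (79/50 : ℝ) ≤ Real.sqrt (5/2) := by
      rw [show (79/50:ℝ) = Real.sqrt ((79/50)^2) from (Real.sqrt_sq (by norm_num)).symm]
      apply Real.sqrt_le_sqrt
      norm_num
    have hfinal : Bs (M+1) ≤ 2 + 4/3 * (u - 79/50) := by
      have : Real.sqrt (3 * K + 5/2) - Real.sqrt (5/2) ≤ u - 79/50 := by
        linarith [hsqK, hs25]
      linarith [hBs, this]
    have hC : (0:ℝ) ≤ 2 + 4/3 * (u - 79/50) := by linarith [hu4]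
    have hBn := Bs_nonneg (M+1)
    have hsq : (Bs (M+1))^2 ≤ (2 + 4/3 * (u - 79/50))^2 := by
      nlinarith [hfinal, hBn, hC]
    have hM13 : (13:ℝ) ≤ (M:ℝ) + 1 := by
      have : (12:ℝ) ≤ (M:ℝ) := by exact_mod_cast hM
      linarith
    calc (Bs (M+1))^2 ≤ (2 + 4/3 * (u - 79/50))^2 := hsq
      _ ≤ 14/5 * (((M+1:ℕ):ℝ)+1) := by
          push_cast
          nlinarith [hu2, hu4, hM13]

set_option maxHeartbeats 2000000 in
lemma KEYB (N n : ℕ) :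
    Bs N * Bs n * ((N:ℝ) + n + 2) ≤ 2 * ((N:ℝ) + n + 1)^2 := by
  by_cases hsm : N ≤ 4 ∧ n ≤ 4
  · obtain ⟨hN, hn⟩ := hsm
    have e0 : Bs 0 = 1 := by norm_num [Bs, bb, Finset.sum_range_succ]
    have e1 : Bs 1 = 2 := by norm_num [Bs, bb, Finset.sum_range_succ, Nat.choose]
    have e2 : Bs 2 = 5/2 := by norm_num [Bs, bb, Finset.sum_range_succ, Nat.choose]
    have e3 : Bs 3 = 26/9 := by norm_num [Bs, bb, Finset.sum_range_succ, Nat.choose]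
    have e4 : Bs 4 = 103/32 := by norm_num [Bs, bb, Finset.sum_range_succ, Nat.choose]
    interval_cases N <;> interval_cases n <;>
      simp only [e0, e1, e2, e3, e4] <;> norm_num
  · have hM6 : (6:ℝ) ≤ (N:ℝ) + n + 1 := by
      rcases not_and_or.mp hsm with h | h <;>
      · push_neg at h
        have : (5:ℕ) ≤ N + n := by omega
        have := (Nat.cast_le (α := ℝ)).mpr this
        push_cast at this
        linarith
    have h1 := Bs_sq_le N
    have h2 := Bs_sq_le n
    have hN0 := Bs_nonneg N
    have hn0 := Bs_nonneg n
    have hprod : (Bs N * Bs n)^2 ≤ (14/5)^2 * (((N:ℝ)+1) * ((n:ℝ)+1)) := by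
      calc (Bs N * Bs n)^2 = (Bs N)^2 * (Bs n)^2 := by ring
        _ ≤ (14/5 * ((N:ℝ)+1)) * (14/5 * ((n:ℝ)+1)) := by
            apply mul_le_mul h1 h2 (by positivity) (by positivity)
        _ = (14/5)^2 * (((N:ℝ)+1) * ((n:ℝ)+1)) := by ring
    have hamgm : ((N:ℝ)+1) * ((n:ℝ)+1) ≤ (((N:ℝ) + n + 2)/2)^2 := by
      nlinarith [sq_nonneg ((N:ℝ) - n)]
    have hBB : Bs N * Bs n ≤ 14/5 * (((N:ℝ) + n + 2)/2) := by
      apply sq_le_imp_le (by positivity) (by positivity)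
      calc (Bs N * Bs n)^2 ≤ (14/5)^2 * (((N:ℝ)+1) * ((n:ℝ)+1)) := hprod
        _ ≤ (14/5)^2 * ((((N:ℝ) + n + 2)/2)^2) := by
            apply mul_le_mul_of_nonneg_left hamgm (by positivity)
        _ = (14/5 * (((N:ℝ) + n + 2)/2))^2 := by ring
    have hM2 : (0:ℝ) < (N:ℝ) + n + 2 := by positivity
    calc Bs N * Bs n * ((N:ℝ) + n + 2)
        ≤ (14/5 * (((N:ℝ) + n + 2)/2)) * ((N:ℝ) + n + 2) := by
          apply mul_le_mul_of_nonneg_right hBB (le_of_lt hM2)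
      _ = 7/5 * ((N:ℝ) + n + 2)^2 := by ring
      _ ≤ 2 * ((N:ℝ) + n + 1)^2 := by nlinarith [hM6]


noncomputable def Ssum (s : Finset 𝒳) (N : ℕ) : ℝ :=
  ∑ x ∈ Fintype.piFinset (fun _ : Fin N => s), ∏ i, empDist x (x i)

lemma empDist_nonneg {n : ℕ} (x : Fin n → 𝒳) (a : 𝒳) : 0 ≤ empDist x a := by
  unfold empDist; positivity

lemma Ssum_nonneg (s : Finset 𝒳) (N : ℕ) : 0 ≤ Ssum s N :=
  Finset.sum_nonneg fun x _ => Finset.prod_nonneg fun i _ => empDist_nonneg x (x i)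

lemma Ssum_empty_le_one (N : ℕ) : Ssum (∅ : Finset 𝒳) N ≤ 1 := by
  rcases Nat.eq_zero_or_pos N with rfl | hN
  · unfold Ssum
    rw [show (Fintype.piFinset (fun _ : Fin 0 => (∅ : Finset 𝒳))) = Finset.univ from
      Finset.eq_univ_of_forall (by
        intro x
        simp only [Fintype.mem_piFinset]
        intro i
        exact i.elim0)]
    simp
  · unfold Ssum
    have : (Fintype.piFinset (fun _ : Fin N => (∅ : Finset 𝒳))) = ∅ := by
      apply Finset.eq_empty_of_forall_notMem
      intro x hx
      have := Fintype.mem_piFinset.mp hx ⟨0, hN⟩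
      simp at this
    rw [this]
    simp

lemma Ssum_singleton (a : 𝒳) (N : ℕ) : Ssum ({a} : Finset 𝒳) N = 1 := by
  unfold Ssum
  have hset : (Fintype.piFinset (fun _ : Fin N => ({a} : Finset 𝒳)))
      = {fun _ => a} := by
    ext x
    simp [Fintype.mem_piFinset, funext_iff]
  rw [hset, Finset.sum_singleton]
  rcases Nat.eq_zero_or_pos N with rfl | hN
  · simp
  · have : empDist (fun _ : Fin N => a) a = 1 := by
      unfold empDist
      rw [show (Finset.univ.filter fun i : Fin N => (fun _ : Fin N => a) i = a) = Finset.univ by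
        simp]
      simp [Finset.card_univ]
      omega
    rw [Finset.prod_congr rfl (fun i _ => this)]
    simp

/-- the restriction of `x` to the positions not equal to `a`, reindexed by `Fin (N - j)`. -/
noncomputable def restrictSeq (a : 𝒳) {N : ℕ} (j : ℕ) (x : Fin N → 𝒳) : Fin (N - j) → 𝒳 :=
  fun i' =>
    if h : ((Finset.univ.filter fun i => x i = a)ᶜ).card = N - j then
      x (((Finset.univ.filter fun i => x i = a)ᶜ).equivFin.symm (Fin.cast h.symm i'))
    else a


lemma restrictSeq_apply {a : 𝒳} {N j : ℕ} {x : Fin N → 𝒳}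
    (h : ((Finset.univ.filter fun i => x i = a)ᶜ).card = N - j) (i' : Fin (N - j)) :
    restrictSeq a j x i' =
      x (((Finset.univ.filter fun i => x i = a)ᶜ).equivFin.symm (Fin.cast h.symm i')) := by
  unfold restrictSeq; rw [dif_pos h]

lemma equivFin_transport {α : Type*} {C D : Finset α} (h : C = D) {m : ℕ}
    (hC : C.card = m) (hD : D.card = m) (u : ↥C) :
    ((D.equivFin.symm (Fin.cast hD.symm (Fin.cast hC (C.equivFin u)))) : α) = ↑u := by
  subst h
  have hcast : Fin.cast hD.symm (Fin.cast hC (C.equivFin u)) = C.equivFin u := Fin.ext rfl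
  rw [hcast, Equiv.symm_apply_apply]

lemma equivFin_roundtrip {α : Type*} (C : Finset α) {m : ℕ} (hcc : C.card = m)
    (i' : Fin m) (pf : ↑(C.equivFin.symm (Fin.cast hcc.symm i')) ∈ C) :
    Fin.cast hcc (C.equivFin ⟨↑(C.equivFin.symm (Fin.cast hcc.symm i')), pf⟩) = i' := by
  rw [Subtype.coe_eta, Equiv.apply_symm_apply]
  exact Fin.ext rfl

lemma equivFin_roundtrip' {α : Type*} (C : Finset α) {m : ℕ} (hcc : C.card = m)
    (u : α) (pf : u ∈ C) :
    ((C.equivFin.symm (Fin.cast hcc.symm (Fin.cast hcc (C.equivFin ⟨u, pf⟩)))) : α) = u := by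
  have h1 : Fin.cast hcc.symm (Fin.cast hcc (C.equivFin ⟨u, pf⟩)) = C.equivFin ⟨u, pf⟩ :=
    Fin.ext rfl
  rw [h1, Equiv.symm_apply_apply]

lemma restrictSeq_spec {a : 𝒳} {N j : ℕ} (x : Fin N → 𝒳)
    (h : ((Finset.univ.filter fun i => x i = a)ᶜ).card = N - j) {i : Fin N}
    (hi : i ∈ (Finset.univ.filter fun i => x i = a)ᶜ) :
    restrictSeq a j x
      (Fin.cast h (((Finset.univ.filter fun i => x i = a)ᶜ).equivFin ⟨i, hi⟩)) = x i := by
  rw [restrictSeq_apply h]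
  congr 1
  have hcast : Fin.cast h.symm (Fin.cast h
      (((Finset.univ.filter fun i => x i = a)ᶜ).equivFin ⟨i, hi⟩))
      = ((Finset.univ.filter fun i => x i = a)ᶜ).equivFin ⟨i, hi⟩ := Fin.ext rfl
  rw [hcast, Equiv.symm_apply_apply]

lemma Ssum_insert {a : 𝒳} {s : Finset 𝒳} (ha : a ∉ s) (N : ℕ) :
    Ssum (insert a s) N ≤ ∑ j ∈ Finset.range (N+1), bb N j * Ssum s (N - j) := by
  classical
  unfold Ssum
  rw [← Finset.sum_fiberwise_of_maps_to
      (g := fun x : Fin N → 𝒳 => (Finset.univ.filter fun i => x i = a).card)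
      (t := Finset.range (N+1))
      (fun x _ => Finset.mem_range.mpr (Nat.lt_succ_of_le (le_trans
        (Finset.card_filter_le _ _) (le_of_eq (Finset.card_univ.trans (Fintype.card_fin N))))))
      (fun x => ∏ i, empDist x (x i))]
  apply Finset.sum_le_sum
  intro j hj
  have hjN : j ≤ N := by have := Finset.mem_range.mp hj; omega
  set F := (Fintype.piFinset (fun _ : Fin N => insert a s)).filter
      (fun x => (Finset.univ.filter fun i => x i = a).card = j) with hF
  set TT := (Finset.univ.powersetCard j : Finset (Finset (Fin N))) ×ˢ
      (Fintype.piFinset fun _ : Fin (N - j) => s) with hTT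
  set w : ℝ := ((j : ℝ) / N) ^ j * (((N - j : ℕ) : ℝ) / N) ^ (N - j) with hw
  set G : Finset (Fin N) × (Fin (N - j) → 𝒳) → ℝ :=
      fun p => w * ∏ i', empDist p.2 (p.2 i') with hG
  have hGnonneg : ∀ p, 0 ≤ G p := by
    intro p
    apply mul_nonneg
    · rw [hw]; positivity
    · exact Finset.prod_nonneg fun i _ => empDist_nonneg _ _
  -- the target sum evaluates to bb N j * Ssum s (N - j)
  have hTsum : ∑ p ∈ TT, G p = bb N j * Ssum s (N - j) := by
    rw [hTT, Finset.sum_product]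
    simp only [hG]
    have hinner : ∀ T' : Finset (Fin N),
        ∑ x' ∈ Fintype.piFinset (fun _ : Fin (N - j) => s), w * ∏ i', empDist x' (x' i')
          = w * Ssum s (N - j) := by
      intro T'
      rw [← Finset.mul_sum]
      rfl
    rw [Finset.sum_congr rfl (fun T' _ => hinner T'), Finset.sum_const]
    have hcard : (Finset.univ.powersetCard j : Finset (Finset (Fin N))).card = N.choose j := by
      rw [Finset.card_powersetCard, Finset.card_univ, Fintype.card_fin]
    rw [hcard, nsmul_eq_mul]
    unfold bb
    rw [hw]
    ring
  unfold Ssum at hTsum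
  rw [← hTsum]
  -- facts about members of the fiber F
  have hmemF : ∀ x, x ∈ F → x ∈ Fintype.piFinset (fun _ : Fin N => insert a s) ∧
      (Finset.univ.filter fun i => x i = a).card = j := fun x hx => Finset.mem_filter.mp hx
  have hccF : ∀ x, x ∈ F → ((Finset.univ.filter fun i => x i = a)ᶜ).card = N - j := by
    intro x hx
    rw [Finset.card_compl, (hmemF x hx).2, Fintype.card_fin]
  -- (F1) restriction lands in piFinset s
  have hF1 : ∀ x, x ∈ F → restrictSeq a j x ∈ Fintype.piFinset (fun _ : Fin (N - j) => s) := by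
    intro x hx
    apply Fintype.mem_piFinset.mpr
    intro i'
    rw [restrictSeq_apply (hccF x hx)]
    set u := ((Finset.univ.filter fun i => x i = a)ᶜ).equivFin.symm
      (Fin.cast (hccF x hx).symm i') with hu
    have humem : (u : Fin N) ∈ (Finset.univ.filter fun i => x i = a)ᶜ := Finset.coe_mem u
    have hne : x (u : Fin N) ≠ a := by
      intro hcontra
      rw [Finset.mem_compl] at humem
      exact humem (Finset.mem_filter.mpr ⟨Finset.mem_univ _, hcontra⟩)
    have hmem' := Fintype.mem_piFinset.mp (hmemF x hx).1 (u : Fin N)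
    rcases Finset.mem_insert.mp hmem' with h | h
    · exact absurd h hne
    · exact h
  -- (F2) counts are preserved for letters b ≠ a
  have hF2 : ∀ x, x ∈ F → ∀ b, b ≠ a →
      (Finset.univ.filter fun i' => restrictSeq a j x i' = b).card
        = (Finset.univ.filter fun i => x i = b).card := by
    intro x hx b hb
    have hcc := hccF x hx
    have h2a : (Finset.univ.filter fun i => x i = b)
        = ((Finset.univ.filter fun i => x i = a)ᶜ).filter fun i => x i = b := by
      ext i
      simp only [Finset.mem_filter, Finset.mem_univ, true_and, Finset.mem_compl]
      constructor
      · intro hib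
        refine ⟨?_, hib⟩
        intro hmem
        exact hb (hib.symm.trans hmem)
      · exact fun h => h.2
    rw [h2a]
    refine Finset.card_bij'
      (i := fun i' _ =>
        ((((Finset.univ.filter fun i => x i = a)ᶜ).equivFin.symm (Fin.cast hcc.symm i')) : Fin N))
      (j := fun u hu => Fin.cast hcc (((Finset.univ.filter fun i => x i = a)ᶜ).equivFin
        ⟨u, (Finset.mem_filter.mp hu).1⟩)) ?hi ?hj ?left ?right
    case hi =>
      intro i' hi'
      apply Finset.mem_filter.mpr
      refine ⟨Finset.coe_mem _, ?_⟩
      have := (Finset.mem_filter.mp hi').2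
      rw [restrictSeq_apply hcc] at this
      exact this
    case hj =>
      intro u hu
      apply Finset.mem_filter.mpr
      refine ⟨Finset.mem_univ _, ?_⟩
      rw [restrictSeq_spec x hcc]
      exact (Finset.mem_filter.mp hu).2
    case left =>
      intro i' hi'
      beta_reduce
      exact equivFin_roundtrip _ hcc i' _
    case right =>
      intro u hu
      beta_reduce
      exact equivFin_roundtrip' _ hcc u _
  -- (F3) the weight identity
  have hF3 : ∀ x, x ∈ F →
      (∏ i, empDist x (x i)) = w * ∏ i', empDist (restrictSeq a j x) (restrictSeq a j x i') := by
    intro x hx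
    have hcc := hccF x hx
    have hcnt := (hmemF x hx).2
    set T := Finset.univ.filter fun i => x i = a with hT
    -- split the product
    rw [← Finset.prod_mul_prod_compl T (fun i => empDist x (x i))]
    -- first part
    have hp1 : ∏ i ∈ T, empDist x (x i) = ((j : ℝ) / N) ^ j := by
      have : ∀ i ∈ T, empDist x (x i) = (j : ℝ) / N := by
        intro i hi
        have hxi : x i = a := (Finset.mem_filter.mp hi).2
        rw [hxi]
        unfold empDist
        rw [← hT, hcnt]
      rw [Finset.prod_congr rfl this, Finset.prod_const, hcnt]
    -- second part
    have hp2 : ∏ i ∈ Tᶜ, empDist x (x i)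
        = (((N - j : ℕ) : ℝ) / N) ^ (N - j)
          * ∏ i', empDist (restrictSeq a j x) (restrictSeq a j x i') := by
      have hpoint : ∀ i ∈ Tᶜ, empDist x (x i)
          = (((N - j : ℕ) : ℝ) / N) * empDist (restrictSeq a j x) (x i) := by
        intro i hi
        have hne : x i ≠ a := by
          intro hcontra
          rw [Finset.mem_compl] at hi
          exact hi (Finset.mem_filter.mpr ⟨Finset.mem_univ _, hcontra⟩)
        have hNj : 0 < N - j := by
          by_contra hcon
          push_neg at hcon
          have h0 : Tᶜ.card = 0 := by omega
          rw [Finset.card_eq_zero] at h0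
          rw [h0] at hi
          exact absurd hi (Finset.notMem_empty i)
        have hcnteq := hF2 x hx (x i) hne
        unfold empDist
        rw [hcnteq]
        have hNj0 : ((N - j : ℕ) : ℝ) ≠ 0 := by
          exact_mod_cast Nat.pos_iff_ne_zero.mp hNj
        rw [div_mul_div_comm,
          mul_comm (((N - j : ℕ) : ℝ)) ((((Finset.univ.filter fun i_1 => x i_1 = x i).card : ℕ)) : ℝ),
          mul_div_mul_right _ _ hNj0]
      rw [Finset.prod_congr rfl hpoint, Finset.prod_mul_distrib, Finset.prod_const,
        Finset.card_compl, Fintype.card_fin, hcnt]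
      congr 1
      -- reindex the product over Tᶜ
      have hre : ∏ i ∈ Tᶜ, empDist (restrictSeq a j x) (x i)
          = ∏ i', empDist (restrictSeq a j x) (restrictSeq a j x i') := by
        rw [← Finset.prod_coe_sort (Tᶜ) (fun i => empDist (restrictSeq a j x) (x i))]
        have heq := Equiv.prod_comp ((finCongr hcc.symm).trans (Tᶜ).equivFin.symm)
          (fun u : ↥(Tᶜ) => empDist (restrictSeq a j x) (x ↑u))
        rw [← heq]
        apply Finset.prod_congr rfl
        intro i' _
        congr 1
        rw [restrictSeq_apply hcc]
        rfl
      rw [hre]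
    rw [hp1, hp2, hw]
    ring
  -- (F4) the map lands in TT
  have hF4 : ∀ x, x ∈ F →
      ((Finset.univ.filter fun i => x i = a), restrictSeq a j x) ∈ TT := by
    intro x hx
    rw [hTT]
    apply Finset.mem_product.mpr
    constructor
    · exact Finset.mem_powersetCard.mpr ⟨Finset.subset_univ _, (hmemF x hx).2⟩
    · exact hF1 x hx
  -- (F5) injectivity
  have hF5 : ∀ x ∈ F, ∀ y ∈ F,
      ((Finset.univ.filter fun i => x i = a), restrictSeq a j x)
        = ((Finset.univ.filter fun i => y i = a), restrictSeq a j y) → x = y := by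
    intro x hx y hy heq
    have hTeq : (Finset.univ.filter fun i => x i = a)
        = (Finset.univ.filter fun i => y i = a) := congrArg Prod.fst heq
    have hreq : restrictSeq a j x = restrictSeq a j y := congrArg Prod.snd heq
    have hccx := hccF x hx
    have hccy := hccF y hy
    funext i
    by_cases hia : x i = a
    · have hiy : i ∈ Finset.univ.filter fun i => y i = a := by
        rw [← hTeq]
        exact Finset.mem_filter.mpr ⟨Finset.mem_univ _, hia⟩
      rw [hia, (Finset.mem_filter.mp hiy).2]
    · have hicx : i ∈ (Finset.univ.filter fun i => x i = a)ᶜ := by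
        rw [Finset.mem_compl]
        intro hmem
        exact hia (Finset.mem_filter.mp hmem).2
      have hCeq : (Finset.univ.filter fun i => x i = a)ᶜ
          = (Finset.univ.filter fun i => y i = a)ᶜ := by rw [hTeq]
      have hspecx := restrictSeq_spec x hccx hicx
      rw [hreq] at hspecx
      rw [restrictSeq_apply hccy] at hspecx
      rw [← hspecx]
      congr 1
      exact equivFin_transport hCeq hccx hccy ⟨i, hicx⟩
  -- assemble
  calc ∑ x ∈ F, ∏ i, empDist x (x i)
      = ∑ x ∈ F, G ((Finset.univ.filter fun i => x i = a), restrictSeq a j x) := by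
        apply Finset.sum_congr rfl
        intro x hx
        rw [hG]
        exact hF3 x hx
    _ = ∑ p ∈ F.image (fun x => ((Finset.univ.filter fun i => x i = a), restrictSeq a j x)),
          G p := (Finset.sum_image hF5).symm
    _ ≤ ∑ p ∈ TT, G p := by
        apply Finset.sum_le_sum_of_subset_of_nonneg
        · intro p hp
          obtain ⟨x, hx, rfl⟩ := Finset.mem_image.mp hp
          exact hF4 x hx
        · intro p _ _
          exact hGnonneg p


lemma key_sum (N n : ℕ) :
    ∑ j ∈ Finset.range (N+1), ∑ i ∈ Finset.range (n+1),
        bb N j * bb n i * (((N:ℝ) + n + 1) - j - i)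
      = Bs N * Bs n * (((N:ℝ) + n + 2) / 2) := by
  have inner : ∀ (m : ℕ) (C : ℝ), ∑ k ∈ Finset.range (m+1), bb m k * (C - k)
      = Bs m * (C - m/2) := by
    intro m C
    have expand : ∀ k : ℕ, bb m k * (C - k) = C * bb m k - (k:ℝ) * bb m k := fun k => by ring
    rw [Finset.sum_congr rfl (fun k _ => expand k), Finset.sum_sub_distrib, ← Finset.mul_sum,
      sum_j_bb]
    have : (∑ k ∈ Finset.range (m+1), bb m k) = Bs m := rfl
    rw [this]
    ring
  have houter : ∀ j ∈ Finset.range (N+1),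
      ∑ i ∈ Finset.range (n+1), bb N j * bb n i * (((N:ℝ) + n + 1) - j - i)
        = Bs n * (bb N j * (((N:ℝ) + n + 1 - n/2) - j)) := by
    intro j _
    have step1 : ∀ i : ℕ, bb N j * bb n i * (((N:ℝ) + n + 1) - j - i)
        = bb N j * (bb n i * ((((N:ℝ) + n + 1) - j) - i)) := fun i => by ring
    rw [Finset.sum_congr rfl (fun i _ => step1 i), ← Finset.mul_sum,
      inner n (((N:ℝ) + n + 1) - j)]
    ring
  rw [Finset.sum_congr rfl houter, ← Finset.mul_sum, inner N (((N:ℝ) + n + 1) - n/2)]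
  ring

lemma Ssum_mul_le (s : Finset 𝒳) : ∀ N n : ℕ,
    Ssum s N * Ssum s n ≤ ((N:ℝ) + n + 1) ^ s.card := by
  induction s using Finset.induction_on with
  | empty =>
      intro N n
      simp only [Finset.card_empty, pow_zero]
      calc Ssum (∅ : Finset 𝒳) N * Ssum (∅ : Finset 𝒳) n
          ≤ 1 * 1 := mul_le_mul (Ssum_empty_le_one N) (Ssum_empty_le_one n)
            (Ssum_nonneg _ _) zero_le_one
        _ = 1 := by norm_num
  | @insert a s ha ih =>
      intro N n
      rcases s.eq_empty_or_nonempty with rfl | hne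
      · have hsing : insert a (∅ : Finset 𝒳) = {a} := by simp
        rw [hsing, Ssum_singleton, Ssum_singleton, Finset.card_singleton]
        have h1 : (0:ℝ) ≤ N := Nat.cast_nonneg N
        have h2 : (0:ℝ) ≤ n := Nat.cast_nonneg n
        rw [pow_one]
        linarith
      · have hc1 : 0 < s.card := Finset.card_pos.mpr hne
        have hA := Ssum_insert ha N
        have hB := Ssum_insert ha n
        set Mr : ℝ := (N:ℝ) + n + 1 with hMr
        have hMr1 : (1:ℝ) ≤ Mr := by
          rw [hMr]
          have h1 : (0:ℝ) ≤ N := Nat.cast_nonneg N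
          have h2 : (0:ℝ) ≤ n := Nat.cast_nonneg n
          linarith
        have hBnn : (0:ℝ) ≤ ∑ i ∈ Finset.range (n+1), bb n i * Ssum s (n-i) :=
          Finset.sum_nonneg fun i _ => mul_nonneg (bb_nonneg n i) (Ssum_nonneg s (n-i))
        calc Ssum (insert a s) N * Ssum (insert a s) n
            ≤ (∑ j ∈ Finset.range (N+1), bb N j * Ssum s (N-j))
              * (∑ i ∈ Finset.range (n+1), bb n i * Ssum s (n-i)) :=
              mul_le_mul hA hB (Ssum_nonneg _ _) (le_trans (Ssum_nonneg _ _) hA)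
          _ = ∑ j ∈ Finset.range (N+1), ∑ i ∈ Finset.range (n+1),
                (bb N j * Ssum s (N-j)) * (bb n i * Ssum s (n-i)) :=
              Finset.sum_mul_sum _ _ _ _
          _ ≤ ∑ j ∈ Finset.range (N+1), ∑ i ∈ Finset.range (n+1),
                bb N j * bb n i * ((Mr - j - i) * Mr ^ (s.card - 1)) := by
              apply Finset.sum_le_sum
              intro j hj
              apply Finset.sum_le_sum
              intro i hi
              have hjN : j ≤ N := by have := Finset.mem_range.mp hj; omega
              have hin : i ≤ n := by have := Finset.mem_range.mp hi; omega
              have hcastj : ((N - j : ℕ):ℝ) = (N:ℝ) - j := by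
                rw [Nat.cast_sub hjN]
              have hcasti : ((n - i : ℕ):ℝ) = (n:ℝ) - i := by
                rw [Nat.cast_sub hin]
              have hIH := ih (N-j) (n-i)
              rw [hcastj, hcasti] at hIH
              have hXval : ((N:ℝ) - j) + ((n:ℝ) - i) + 1 = Mr - j - i := by
                rw [hMr]; ring
              rw [hXval] at hIH
              have hjr : (0:ℝ) ≤ (j:ℝ) := Nat.cast_nonneg j
              have hir : (0:ℝ) ≤ (i:ℝ) := Nat.cast_nonneg i
              have hX1 : (1:ℝ) ≤ Mr - j - i := by
                rw [hMr]
                have h1 : (j:ℝ) ≤ N := by exact_mod_cast hjN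
                have h2 : (i:ℝ) ≤ n := by exact_mod_cast hin
                linarith
              have hXM : Mr - j - i ≤ Mr := by linarith
              have hpow : (Mr - j - i) ^ s.card ≤ (Mr - j - i) * Mr ^ (s.card - 1) := by
                obtain ⟨c, hc⟩ : ∃ c, s.card = c + 1 := ⟨s.card - 1, by omega⟩
                rw [hc, Nat.add_sub_cancel, pow_succ]
                calc (Mr - j - i) ^ c * (Mr - j - i)
                    ≤ Mr ^ c * (Mr - j - i) := by
                      apply mul_le_mul_of_nonneg_right _ (by linarith)
                      exact pow_le_pow_left₀ (by linarith) hXM c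
                  _ = (Mr - j - i) * Mr ^ c := by ring
              calc (bb N j * Ssum s (N-j)) * (bb n i * Ssum s (n-i))
                  = (bb N j * bb n i) * (Ssum s (N-j) * Ssum s (n-i)) := by ring
                _ ≤ (bb N j * bb n i) * ((Mr - j - i) ^ s.card) := by
                    apply mul_le_mul_of_nonneg_left hIH
                      (mul_nonneg (bb_nonneg N j) (bb_nonneg n i))
                _ ≤ (bb N j * bb n i) * ((Mr - j - i) * Mr ^ (s.card - 1)) := by
                    apply mul_le_mul_of_nonneg_left hpow
                      (mul_nonneg (bb_nonneg N j) (bb_nonneg n i))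
                _ = bb N j * bb n i * ((Mr - j - i) * Mr ^ (s.card - 1)) := by ring
          _ = (∑ j ∈ Finset.range (N+1), ∑ i ∈ Finset.range (n+1),
                bb N j * bb n i * (Mr - j - i)) * Mr ^ (s.card - 1) := by
              rw [Finset.sum_mul]
              apply Finset.sum_congr rfl
              intro j _
              rw [Finset.sum_mul]
              apply Finset.sum_congr rfl
              intro i _
              ring
          _ = (Bs N * Bs n * (((N:ℝ) + n + 2) / 2)) * Mr ^ (s.card - 1) := by
              rw [hMr, key_sum]
          _ ≤ (Mr ^ 2) * Mr ^ (s.card - 1) := by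
              apply mul_le_mul_of_nonneg_right _ (pow_nonneg (by linarith) _)
              have hKB := KEYB N n
              rw [hMr]
              nlinarith [hKB]
          _ = Mr ^ (s.card + 1) := by
              rw [← pow_add]
              congr 1
              omega
          _ = ((N:ℝ) + n + 1) ^ (insert a s).card := by
              rw [Finset.card_insert_of_notMem ha, hMr]


lemma prod_comp_counts {m : ℕ} (f : 𝒳 → ℝ) (x : Fin m → 𝒳) :
    ∏ i, f (x i) = ∏ a, f a ^ (Finset.univ.filter fun i => x i = a).card := by
  rw [← Finset.prod_fiberwise_of_maps_to (g := x) (t := Finset.univ)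
    (fun i _ => Finset.mem_univ (x i)) (fun i => f (x i))]
  apply Finset.prod_congr rfl
  intro a _
  rw [Finset.prod_congr rfl (fun i hi => by rw [(Finset.mem_filter.mp hi).2] :
    ∀ i ∈ Finset.univ.filter fun i => x i = a, f (x i) = f a), Finset.prod_const]

lemma sum_counts {m : ℕ} (x : Fin m → 𝒳) :
    ∑ a, (Finset.univ.filter fun i => x i = a).card = m := by
  rw [← Finset.card_eq_sum_card_fiberwise (fun i (_ : i ∈ Finset.univ) => Finset.mem_univ (x i)),
    Finset.card_univ, Fintype.card_fin]

lemma ml_bound (P : 𝒳 → ℝ) (hP0 : ∀ a, 0 ≤ P a) (hP1 : ∑ a, P a ≤ 1)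
    (c : 𝒳 → ℕ) (m : ℕ) (hm : ∑ a, c a = m) (hm0 : 0 < m) :
    ∏ a, P a ^ c a ≤ ∏ a, ((c a : ℝ) / m) ^ c a := by
  by_cases hzero : ∃ a, c a ≠ 0 ∧ P a = 0
  · obtain ⟨a0, hc0, hP0'⟩ := hzero
    have : ∏ a, P a ^ c a = 0 :=
      Finset.prod_eq_zero (Finset.mem_univ a0) (by rw [hP0']; exact zero_pow hc0)
    rw [this]
    positivity
  · push_neg at hzero
    have hpos : ∀ a, c a ≠ 0 → 0 < P a := fun a hc => lt_of_le_of_ne (hP0 a) (Ne.symm (hzero a hc))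
    have hm0' : ((m:ℝ)) ≠ 0 := by positivity
    have hLHS : ∏ a, P a ^ c a = ∏ a ∈ Finset.univ.filter (fun a => c a ≠ 0), P a ^ c a := by
      rw [← Finset.prod_filter_mul_prod_filter_not Finset.univ (fun a => c a ≠ 0)]
      have : ∏ a ∈ Finset.univ.filter (fun a => ¬ c a ≠ 0), P a ^ c a = 1 := by
        apply Finset.prod_eq_one
        intro a ha
        have : c a = 0 := by simpa using (Finset.mem_filter.mp ha).2
        rw [this, pow_zero]
      rw [this, mul_one]
    have hRHS : ∏ a, ((c a : ℝ) / m) ^ c a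
        = ∏ a ∈ Finset.univ.filter (fun a => c a ≠ 0), ((c a : ℝ) / m) ^ c a := by
      rw [← Finset.prod_filter_mul_prod_filter_not Finset.univ (fun a => c a ≠ 0)]
      have : ∏ a ∈ Finset.univ.filter (fun a => ¬ c a ≠ 0), ((c a : ℝ) / m) ^ c a = 1 := by
        apply Finset.prod_eq_one
        intro a ha
        have : c a = 0 := by simpa using (Finset.mem_filter.mp ha).2
        rw [this, pow_zero]
      rw [this, mul_one]
    rw [hLHS, hRHS]
    set supp := Finset.univ.filter (fun a => c a ≠ 0) with hsupp
    have hcsum : ∑ a ∈ supp, (c a : ℝ) = m := by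
      rw [hsupp]
      have h1 : ∑ a ∈ Finset.univ.filter (fun a => c a ≠ 0), (c a : ℝ)
          = ∑ a, (c a : ℝ) := by
        apply Finset.sum_filter_of_ne
        intro a _ hne
        intro hc0
        exact hne (by rw [hc0]; norm_num)
      rw [h1, ← Nat.cast_sum, hm]
    have hPsum : ∑ a ∈ supp, P a ≤ 1 := by
      calc ∑ a ∈ supp, P a
          ≤ ∑ a, P a := Finset.sum_le_sum_of_subset_of_nonneg
            (Finset.filter_subset _ _) (fun a _ _ => hP0 a)
        _ ≤ 1 := hP1
    have hkey : ∏ a ∈ supp, (P a * m / c a) ^ c a ≤ 1 := by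
      have hterm : ∀ a ∈ supp, (P a * m / c a) ^ c a ≤ Real.exp (P a * m - c a) := by
        intro a ha
        have hca : c a ≠ 0 := by
          have := (Finset.mem_filter.mp ha).2
          simpa using this
        have hcar : (0:ℝ) < (c a : ℝ) := by
          have : 0 < c a := Nat.pos_of_ne_zero hca
          exact_mod_cast this
        have htn : (0:ℝ) ≤ P a * m / c a := by
          have := hP0 a
          positivity
        have ht : P a * m / c a ≤ Real.exp (P a * m / c a - 1) := by
          have := Real.add_one_le_exp (P a * m / c a - 1)
          linarith
        calc (P a * m / c a) ^ c a ≤ (Real.exp (P a * m / c a - 1)) ^ c a :=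
            pow_le_pow_left₀ htn ht (c a)
          _ = Real.exp ((P a * m / c a - 1) * c a) := by
              rw [mul_comm (P a * m / c a - 1) ((c a : ℝ)), Real.exp_nat_mul]
          _ = Real.exp (P a * m - c a) := by
              congr 1
              field_simp
      calc ∏ a ∈ supp, (P a * m / c a) ^ c a
          ≤ ∏ a ∈ supp, Real.exp (P a * m - c a) := by
            apply Finset.prod_le_prod
            · intro a _
              have := hP0 a
              positivity
            · exact hterm
        _ = Real.exp (∑ a ∈ supp, (P a * m - c a)) := (Real.exp_sum _ _).symm
        _ ≤ 1 := by
            rw [Real.exp_le_one_iff, Finset.sum_sub_distrib, ← Finset.sum_mul]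
            rw [hcsum]
            nlinarith [hPsum, (by positivity : (0:ℝ) < (m:ℝ))]
    have hsplit : ∏ a ∈ supp, P a ^ c a
        = (∏ a ∈ supp, (P a * m / c a) ^ c a) * ∏ a ∈ supp, ((c a : ℝ) / m) ^ c a := by
      rw [← Finset.prod_mul_distrib]
      apply Finset.prod_congr rfl
      intro a ha
      have hca : c a ≠ 0 := by
        have := (Finset.mem_filter.mp ha).2
        simpa using this
      have hcar : ((c a : ℝ)) ≠ 0 := by
        have : 0 < c a := Nat.pos_of_ne_zero hca
        positivity
      rw [← mul_pow]
      congr 1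
      field_simp
    rw [hsplit]
    calc (∏ a ∈ supp, (P a * m / c a) ^ c a) * ∏ a ∈ supp, ((c a : ℝ) / m) ^ c a
        ≤ 1 * ∏ a ∈ supp, ((c a : ℝ) / m) ^ c a := by
          apply mul_le_mul_of_nonneg_right hkey
          apply Finset.prod_nonneg
          intro a _
          positivity
      _ = ∏ a ∈ supp, ((c a : ℝ) / m) ^ c a := one_mul _
lemma pointwise_bound (P : 𝒳 → ℝ) (hP : IsPMF P) {N n : ℕ} (hN : 0 < N) (hn : 0 < n)
    (γ : ℝ) (x : Fin N → 𝒳) (y : Fin n → 𝒳)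
    (hcond : γ * N ≤ (n : ℝ) * GJS (empDist x) (empDist y) ((N : ℝ) / n)) :
    prodProb P x * prodProb P y ≤
      Real.exp (-γ * N) * ((∏ i, empDist x (x i)) * (∏ i, empDist y (y i))) := by
  classical
  set kx : 𝒳 → ℕ := fun a => (Finset.univ.filter fun i => x i = a).card with hkx
  set ky : 𝒳 → ℕ := fun a => (Finset.univ.filter fun i => y i = a).card with hky
  have hNr : ((N:ℝ)) ≠ 0 := by positivity
  have hnr : ((n:ℝ)) ≠ 0 := by positivity
  have hNnr : ((N:ℝ) + n) ≠ 0 := by positivity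
  set α : ℝ := (N : ℝ) / n with hα
  set V : 𝒳 → ℝ := empDist x with hV
  set W : 𝒳 → ℝ := empDist y with hW
  set Q : 𝒳 → ℝ := mix V W α with hQdef
  have hVa : ∀ a, V a = (kx a : ℝ) / N := fun a => rfl
  have hWa : ∀ a, W a = (ky a : ℝ) / n := fun a => rfl
  have hQa : ∀ a, Q a = ((kx a + ky a : ℕ) : ℝ) / ((N:ℝ) + n) := by
    intro a
    rw [hQdef]
    unfold mix
    rw [hVa, hWa, hα]
    push_cast
    field_simp
    ring
  have hVpos : ∀ a, kx a ≠ 0 → 0 < V a := by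
    intro a ha
    rw [hVa]
    have h1 : 0 < kx a := Nat.pos_of_ne_zero ha
    have h2 : (0:ℝ) < (kx a : ℝ) := by exact_mod_cast h1
    positivity
  have hWpos : ∀ a, ky a ≠ 0 → 0 < W a := by
    intro a ha
    rw [hWa]
    have h1 : 0 < ky a := Nat.pos_of_ne_zero ha
    have h2 : (0:ℝ) < (ky a : ℝ) := by exact_mod_cast h1
    positivity
  have hQposx : ∀ a, kx a ≠ 0 → 0 < Q a := by
    intro a ha
    rw [hQa a]
    have h1 : 0 < kx a + ky a := by
      have := Nat.pos_of_ne_zero ha; omega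
    have h2 : (0:ℝ) < ((kx a + ky a : ℕ) : ℝ) := by exact_mod_cast h1
    positivity
  have hQposy : ∀ a, ky a ≠ 0 → 0 < Q a := by
    intro a ha
    rw [hQa a]
    have h1 : 0 < kx a + ky a := by
      have := Nat.pos_of_ne_zero ha; omega
    have h2 : (0:ℝ) < ((kx a + ky a : ℕ) : ℝ) := by exact_mod_cast h1
    positivity
  have key1 : (n : ℝ) * GJS V W α
      = (∑ a, (kx a : ℝ) * Real.log (V a / Q a))
        + (∑ a, (ky a : ℝ) * Real.log (W a / Q a)) := by
    unfold GJS
    rw [← hQdef]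
    have hnα : (n:ℝ) * α = N := by
      rw [hα]; field_simp
    have e1 : (n:ℝ) * (α * KL V Q + KL W Q) = (N:ℝ) * KL V Q + (n:ℝ) * KL W Q := by
      rw [← hnα]; ring
    rw [e1]
    congr 1
    · unfold KL
      rw [Finset.mul_sum]
      apply Finset.sum_congr rfl
      intro a _
      rw [hVa]
      field_simp
    · unfold KL
      rw [Finset.mul_sum]
      apply Finset.sum_congr rfl
      intro a _
      rw [hWa]
      field_simp
  have exp_pow : ∀ (k : ℕ) (t : ℝ), (k ≠ 0 → 0 < t) →
      Real.exp ((k:ℝ) * Real.log t) = t ^ k := by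
    intro k t ht
    rcases Nat.eq_zero_or_pos k with rfl | hk
    · simp
    · rw [Real.exp_nat_mul, Real.exp_log (ht (by omega))]
  have key2 : Real.exp ((n : ℝ) * GJS V W α) * ∏ a, Q a ^ (kx a + ky a)
      = (∏ a, V a ^ kx a) * ∏ a, W a ^ ky a := by
    rw [key1, Real.exp_add, Real.exp_sum, Real.exp_sum]
    have e2 : ∀ a, Real.exp ((kx a : ℝ) * Real.log (V a / Q a)) = (V a / Q a) ^ kx a := by
      intro a
      apply exp_pow
      intro hk
      exact div_pos (hVpos a hk) (hQposx a hk)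
    have e3 : ∀ a, Real.exp ((ky a : ℝ) * Real.log (W a / Q a)) = (W a / Q a) ^ ky a := by
      intro a
      apply exp_pow
      intro hk
      exact div_pos (hWpos a hk) (hQposy a hk)
    rw [Finset.prod_congr rfl (fun a _ => e2 a), Finset.prod_congr rfl (fun a _ => e3 a)]
    rw [← Finset.prod_mul_distrib, ← Finset.prod_mul_distrib, ← Finset.prod_mul_distrib]
    apply Finset.prod_congr rfl
    intro a _
    by_cases hQ0 : Q a = 0
    · have hsum0 : kx a + ky a = 0 := by
        by_contra hcon
        have h1 : 0 < kx a + ky a := by omega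
        have h2 : (0:ℝ) < ((kx a + ky a : ℕ) : ℝ) := by exact_mod_cast h1
        have h3 := hQa a
        rw [hQ0] at h3
        have h4 : ((kx a + ky a : ℕ) : ℝ) = 0 := by
          by_contra h5
          have := div_ne_zero h5 hNnr
          exact this h3.symm
        linarith
      have hkx0 : kx a = 0 := by omega
      have hky0 : ky a = 0 := by omega
      rw [hkx0, hky0]
      simp
    · rw [pow_add, div_pow, div_pow]
      field_simp
  have hml : ∏ a, P a ^ (kx a + ky a) ≤ ∏ a, Q a ^ (kx a + ky a) := by
    have hsum : ∑ a, (kx a + ky a) = N + n := by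
      rw [Finset.sum_add_distrib]
      rw [hkx, hky]
      rw [sum_counts x, sum_counts y]
    have hmb := ml_bound P hP.1 (le_of_eq hP.2) (fun a => kx a + ky a) (N + n) hsum (by omega)
    calc ∏ a, P a ^ (kx a + ky a)
        ≤ ∏ a, (((kx a + ky a : ℕ) : ℝ) / ((N + n : ℕ) : ℝ)) ^ (kx a + ky a) := hmb
      _ = ∏ a, Q a ^ (kx a + ky a) := by
          apply Finset.prod_congr rfl
          intro a _
          rw [hQa a]
          congr 2
          push_cast
          ring
  have hprod_x : prodProb P x = ∏ a, P a ^ kx a := prod_comp_counts P x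
  have hprod_y : prodProb P y = ∏ a, P a ^ ky a := prod_comp_counts P y
  have hemp_x : (∏ i, empDist x (x i)) = ∏ a, V a ^ kx a := prod_comp_counts V x
  have hemp_y : (∏ i, empDist y (y i)) = ∏ a, W a ^ ky a := prod_comp_counts W y
  have hQc_eq : ∏ a, Q a ^ (kx a + ky a)
      = Real.exp (-((n : ℝ) * GJS V W α)) * ((∏ a, V a ^ kx a) * ∏ a, W a ^ ky a) := by
    rw [← key2, ← mul_assoc, ← Real.exp_add, neg_add_cancel, Real.exp_zero, one_mul]
  have hexp_mono : Real.exp (-((n : ℝ) * GJS V W α)) ≤ Real.exp (-γ * N) := by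
    apply Real.exp_le_exp.mpr
    nlinarith [hcond]
  have hVWnonneg : (0:ℝ) ≤ (∏ a, V a ^ kx a) * ∏ a, W a ^ ky a := by
    apply mul_nonneg
    · apply Finset.prod_nonneg
      intro a _
      exact pow_nonneg (by rw [hV]; exact empDist_nonneg x a) _
    · apply Finset.prod_nonneg
      intro a _
      exact pow_nonneg (by rw [hW]; exact empDist_nonneg y a) _
  calc prodProb P x * prodProb P y
      = ∏ a, P a ^ (kx a + ky a) := by
        rw [hprod_x, hprod_y, ← Finset.prod_mul_distrib]
        exact Finset.prod_congr rfl (fun a _ => (pow_add _ _ _).symm)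
    _ ≤ ∏ a, Q a ^ (kx a + ky a) := hml
    _ = Real.exp (-((n : ℝ) * GJS V W α)) * ((∏ a, V a ^ kx a) * ∏ a, W a ^ ky a) := hQc_eq
    _ ≤ Real.exp (-γ * N) * ((∏ a, V a ^ kx a) * ∏ a, W a ^ ky a) :=
        mul_le_mul_of_nonneg_right hexp_mono hVWnonneg
    _ = Real.exp (-γ * N) * ((∏ i, empDist x (x i)) * (∏ i, empDist y (y i))) := by
        rw [hemp_x, hemp_y]

theorem gjs_same_distribution_probability_bound
    (P : 𝒳 → ℝ) (hP : IsPMF P)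
    (N n : ℕ) (hN : 0 < N) (hn : 0 < n) (γ : ℝ) (hγ : 0 < γ) :
    (∑ x : Fin N → 𝒳, ∑ y : Fin n → 𝒳,
        if γ * N ≤ (n : ℝ) * GJS (empDist x) (empDist y) ((N : ℝ) / n) then
          prodProb P x * prodProb P y
        else 0) ≤
      Real.exp (-γ * N) * ((n : ℝ) + N + 1) ^ Fintype.card 𝒳 := by
  classical
  have hpoint : ∀ x : Fin N → 𝒳, ∀ y : Fin n → 𝒳,
      (if γ * N ≤ (n : ℝ) * GJS (empDist x) (empDist y) ((N : ℝ) / n) then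
          prodProb P x * prodProb P y else 0)
        ≤ Real.exp (-γ * N) * ((∏ i, empDist x (x i)) * (∏ i, empDist y (y i))) := by
    intro x y
    split_ifs with h
    · exact pointwise_bound P hP hN hn γ x y h
    · apply mul_nonneg (Real.exp_nonneg _)
      exact mul_nonneg (Finset.prod_nonneg fun i _ => empDist_nonneg x (x i))
        (Finset.prod_nonneg fun i _ => empDist_nonneg y (y i))
  calc (∑ x : Fin N → 𝒳, ∑ y : Fin n → 𝒳,
        if γ * N ≤ (n : ℝ) * GJS (empDist x) (empDist y) ((N : ℝ) / n) then
          prodProb P x * prodProb P y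
        else 0)
      ≤ ∑ x : Fin N → 𝒳, ∑ y : Fin n → 𝒳,
          Real.exp (-γ * N) * ((∏ i, empDist x (x i)) * (∏ i, empDist y (y i))) :=
        Finset.sum_le_sum fun x _ => Finset.sum_le_sum fun y _ => hpoint x y
    _ = Real.exp (-γ * N) * ((∑ x : Fin N → 𝒳, ∏ i, empDist x (x i))
          * (∑ y : Fin n → 𝒳, ∏ i, empDist y (y i))) := by
        rw [Finset.sum_mul_sum, Finset.mul_sum]
        apply Finset.sum_congr rfl
        intro x _
        rw [Finset.mul_sum]
    _ = Real.exp (-γ * N) * (Ssum (Finset.univ : Finset 𝒳) N * Ssum (Finset.univ : Finset 𝒳) n) := by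
        unfold Ssum
        simp only [Fintype.piFinset_univ]
    _ ≤ Real.exp (-γ * N) * (((N:ℝ) + n + 1) ^ (Finset.univ : Finset 𝒳).card) := by
        apply mul_le_mul_of_nonneg_left _ (Real.exp_nonneg _)
        exact Ssum_mul_le (Finset.univ : Finset 𝒳) N n
    _ = Real.exp (-γ * N) * ((n : ℝ) + N + 1) ^ Fintype.card 𝒳 := by
        rw [Finset.card_univ]
        congr 2
        ring


end SeqClass
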